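/- arXiv:1110.4996 — 3 statements merged into one kernel-verified Lean document; each statement's English description precedes it below -/
import Mathlib

section
/- Let G be a topological group, X a G-space admitting local cross-sections (i.e., for every point x0 of X there is a continuous map χ from a neighborhood U of x0 to G with χ(u)·x0 = u for all u in U). Then every G-equivariant continuous map π : Y → X from a G-space Y to X is locally trivial: every point of X has a neighborhood U such that π restricted to π⁻¹(U) is homeomorphic over U to the projection U × π⁻¹(x0) → U. -/
/-- Palais: if a `G`-space `X` admits local cross-sections, then every
`G`-equivariant continuous map `π : Y → X` is locally trivial. -/
theorem stmt_0 {G X Y : Type*} [Group G] [TopologicalSpace G] [IsTopologicalGroup G]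
    [TopologicalSpace X] [MulAction G X] [ContinuousSMul G X]
    [TopologicalSpace Y] [MulAction G Y] [ContinuousSMul G Y]
    (π : Y → X) (hπcont : Continuous π)
    (hequiv : ∀ (g : G) (y : Y), π (g • y) = g • π y)
    (hsec : ∀ x0 : X, ∃ U ∈ nhds x0, ∃ χ : X → G,
      ContinuousOn χ U ∧ ∀ u ∈ U, χ u • x0 = u) :
    ∀ x0 : X, ∃ U ∈ nhds x0,
      ∃ e : ↥(π ⁻¹' U) ≃ₜ ↥U × ↥(π ⁻¹' {x0}),
        ∀ y : ↥(π ⁻¹' U), ((e y).1 : X) = π (y : Y) := by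
  intro x0
  obtain ⟨U, hU, χ, hχcont, hχ⟩ := hsec x0
  set V : Set X := interior U with hV
  have hVU : V ⊆ U := interior_subset
  have hVopen : IsOpen V := isOpen_interior
  have hx0V : x0 ∈ V := mem_interior_iff_mem_nhds.mpr hU
  refine ⟨V, hVopen.mem_nhds hx0V, ?_⟩
  -- key computations
  have hπmem : ∀ y : ↥(π ⁻¹' V), π (y : Y) ∈ V := fun y => y.2
  have key1 : ∀ y : ↥(π ⁻¹' V), π ((χ (π (y : Y)))⁻¹ • (y : Y)) = x0 := by
    intro y
    rw [hequiv]
    rw [inv_smul_eq_iff]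
    exact (hχ _ (hVU (hπmem y))).symm
  have key2 : ∀ (u : ↥V) (z : ↥(π ⁻¹' {x0})), π (χ (u : X) • (z : Y)) = (u : X) := by
    intro u z
    rw [hequiv]
    have hz : π (z : Y) = x0 := z.2
    rw [hz]
    exact hχ _ (hVU u.2)
  -- the equivalence
  refine ⟨{
    toFun := fun y => (⟨π (y : Y), y.2⟩, ⟨(χ (π (y : Y)))⁻¹ • (y : Y), key1 y⟩),
    invFun := fun p => ⟨χ (p.1 : X) • (p.2 : Y), by
      show π _ ∈ V
      rw [key2 p.1 p.2]; exact p.1.2⟩,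
    left_inv := by
      intro y
      ext
      simp [smul_inv_smul]
    right_inv := by
      rintro ⟨u, z⟩
      have h := key2 u z
      refine Prod.ext (Subtype.ext ?_) (Subtype.ext ?_)
      · exact h
      · show (χ (π (χ (u : X) • (z : Y))))⁻¹ • (χ (u : X) • (z : Y)) = (z : Y)
        rw [h, inv_smul_smul]
    continuous_toFun := by
      have hχc : Continuous fun y : ↥(π ⁻¹' V) => χ (π (y : Y)) :=
        hχcont.comp_continuous (hπcont.comp continuous_subtype_val)
          (fun y => hVU (hπmem y))
      refine Continuous.prodMk ?_ ?_
      · exact Continuous.subtype_mk (hπcont.comp continuous_subtype_val) _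
      · exact Continuous.subtype_mk (Continuous.smul hχc.inv continuous_subtype_val) _
    continuous_invFun := by
      have hχc : Continuous fun p : ↥V × ↥(π ⁻¹' {x0}) => χ (p.1 : X) :=
        hχcont.comp_continuous (continuous_subtype_val.comp continuous_fst)
          (fun p => hVU p.1.2)
      exact Continuous.subtype_mk
        (Continuous.smul hχc (continuous_subtype_val.comp continuous_snd)) _
  }, fun y => rfl⟩
end

section
/- Every semialgebraic subset S of ℝⁿ with empty interior is contained in the zero set of a nontrivial polynomial: there exists a polynomial p on ℝⁿ, not identically zero, with p(x) = 0 for all x ∈ S. -/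
/-- The semialgebraic subsets of `ℝⁿ`: the smallest Boolean algebra of subsets
containing all sets of the form `{x | p x > 0}` for polynomials `p`. -/
inductive IsSemialgebraic (n : ℕ) : Set (Fin n → ℝ) → Prop where
  | basic (p : MvPolynomial (Fin n) ℝ) :
      IsSemialgebraic n {x | 0 < MvPolynomial.eval x p}
  | compl {s : Set (Fin n → ℝ)} : IsSemialgebraic n s → IsSemialgebraic n sᶜ
  | union {s t : Set (Fin n → ℝ)} :
      IsSemialgebraic n s → IsSemialgebraic n t → IsSemialgebraic n (s ∪ t)

theorem frontier_vanish {n : ℕ} {S : Set (Fin n → ℝ)} (hS : IsSemialgebraic n S) :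
    ∃ p : MvPolynomial (Fin n) ℝ, p ≠ 0 ∧ ∀ x ∈ frontier S, MvPolynomial.eval x p = 0 := by
  induction hS with
  | basic p =>
    by_cases hp : p = 0
    · refine ⟨1, one_ne_zero, ?_⟩
      subst hp
      simp
    · refine ⟨p, hp, ?_⟩
      intro x hx
      have hopen : IsOpen {x : Fin n → ℝ | 0 < MvPolynomial.eval x p} :=
        isOpen_lt continuous_const (MvPolynomial.continuous_eval p)
      have hcl : closure {x : Fin n → ℝ | 0 < MvPolynomial.eval x p} ⊆
          {x | 0 ≤ MvPolynomial.eval x p} := by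
        exact closure_minimal (fun x (hx : 0 < MvPolynomial.eval x p) => le_of_lt hx)
          (isClosed_le continuous_const (MvPolynomial.continuous_eval p))
      rw [frontier, hopen.interior_eq] at hx
      have h1 := hcl hx.1
      have h2 := hx.2
      simp only [Set.mem_setOf_eq] at h1 h2 ⊢
      linarith [lt_or_eq_of_le h1]
  | compl hs ih =>
    obtain ⟨p, hp, hfp⟩ := ih
    exact ⟨p, hp, fun x hx => hfp x (by rwa [frontier_compl] at hx)⟩
  | union hs ht ihs iht =>
    obtain ⟨p, hp, hfp⟩ := ihs
    obtain ⟨q, hq, hfq⟩ := iht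
    refine ⟨p * q, mul_ne_zero hp hq, fun x hx => ?_⟩
    rcases frontier_union_subset _ _ hx with h | h
    · simp [hfp x h.1]
    · simp [hfq x h.2]

/-- A semialgebraic subset of `ℝⁿ` with empty interior is contained in the zero
set of a nontrivial polynomial. -/
theorem stmt_2 {n : ℕ} {S : Set (Fin n → ℝ)} (hS : IsSemialgebraic n S)
    (hint : interior S = ∅) :
    ∃ p : MvPolynomial (Fin n) ℝ, p ≠ 0 ∧ ∀ x ∈ S, MvPolynomial.eval x p = 0 := by
  obtain ⟨p, hp, hfp⟩ := frontier_vanish hS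
  refine ⟨p, hp, fun x hx => hfp x ?_⟩
  rw [frontier, hint, Set.diff_empty]
  exact subset_closure hx
end

section
/- Suppose a group H acts properly discontinuously on a locally compact, connected Hausdorff space X with compact quotient X/H. Then H is finitely generated. In particular, if C is a compact subset of X whose interior maps onto X/H, then H is generated by the finitely many elements h ∈ H with h(C) ∩ C ≠ ∅. -/
open Pointwise

/-- If `H` acts properly discontinuously (by homeomorphisms) on a locally
compact connected Hausdorff space `X` with compact quotient, then `H` is
finitely generated; in particular, if `C` is compact and its interior maps
onto `X/H`, then `H` is generated by the finitely many `h` with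
`h • C ∩ C ≠ ∅`. -/
theorem stmt_3 {H X : Type*} [Group H] [TopologicalSpace X]
    [LocallyCompactSpace X] [ConnectedSpace X] [T2Space X]
    [MulAction H X] (hhomeo : ∀ h : H, Continuous (fun x : X => h • x))
    (hpd : ∀ K : Set X, IsCompact K → {h : H | ((h • K) ∩ K).Nonempty}.Finite)
    [CompactSpace (Quotient (MulAction.orbitRel H X))]
    (C : Set X) (hC : IsCompact C)
    (hcover : ∀ x : X, ∃ h : H, h • x ∈ interior C) :
    Group.FG H ∧ {h : H | ((h • C) ∩ C).Nonempty}.Finite ∧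
      Subgroup.closure {h : H | ((h • C) ∩ C).Nonempty} = ⊤ := by
  have hSfin : {h : H | ((h • C) ∩ C).Nonempty}.Finite := hpd C hC
  set S : Set H := {h : H | ((h • C) ∩ C).Nonempty} with hSdef
  set G := Subgroup.closure S with hGdef
  have hsmul_open : ∀ (h : H) (U : Set X), IsOpen U → IsOpen (h • U) := by
    intro h U hU
    have hEq : h • U = (fun x : X => h⁻¹ • x) ⁻¹' U := by
      ext x
      simp [Set.mem_smul_set_iff_inv_smul_mem, Set.mem_preimage]
    rw [hEq]
    exact hU.preimage (hhomeo h⁻¹)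
  obtain ⟨x₀⟩ : Nonempty X := inferInstance
  obtain ⟨h₀, hh₀⟩ := hcover x₀
  have hint : (interior C).Nonempty := ⟨h₀ • x₀, hh₀⟩
  have key : ∀ g₁ g₂ : H, ((g₁ • interior C) ∩ (g₂ • interior C)).Nonempty →
      g₂⁻¹ * g₁ ∈ S := by
    rintro g₁ g₂ ⟨x, hx1, hx2⟩
    rw [Set.mem_smul_set_iff_inv_smul_mem] at hx1 hx2
    refine ⟨g₂⁻¹ • x, ⟨g₁⁻¹ • x, interior_subset hx1, ?_⟩, interior_subset hx2⟩
    simp [smul_smul]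
  set A : Set X := ⋃ g ∈ G, g • interior C with hAdef
  have hAopen : IsOpen A := isOpen_biUnion fun g _ => hsmul_open g _ isOpen_interior
  have hAne : A.Nonempty := by
    obtain ⟨y, hy⟩ := hint
    exact ⟨y, Set.mem_biUnion G.one_mem
      (by simpa using Set.smul_mem_smul_set (a := (1:H)) hy)⟩
  have hcompl : Aᶜ = ⋃ g ∈ {g : H | g ∉ G}, g • interior C := by
    ext x
    constructor
    · intro hx
      obtain ⟨h, hh⟩ := hcover x
      have hxmem : x ∈ h⁻¹ • interior C := by
        rw [Set.mem_smul_set_iff_inv_smul_mem]; simpa using hh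
      refine Set.mem_biUnion (fun hmem => ?_) hxmem
      exact hx (Set.mem_biUnion hmem hxmem)
    · rintro hx hxA
      obtain ⟨g₂, hg₂, hx2⟩ := Set.mem_iUnion₂.1 hx
      obtain ⟨g₁, hg₁, hx1⟩ := Set.mem_iUnion₂.1 hxA
      have hgS : g₂⁻¹ * g₁ ∈ S := key g₁ g₂ ⟨x, hx1, hx2⟩
      have hg1G : g₂⁻¹ * g₁ ∈ G := Subgroup.subset_closure hgS
      refine hg₂ ?_
      have heq : g₂ = g₁ * (g₂⁻¹ * g₁)⁻¹ := by group
      rw [heq]; exact G.mul_mem hg₁ (G.inv_mem hg1G)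
  have hAclosed : IsClosed A := by
    rw [← isOpen_compl_iff, hcompl]
    exact isOpen_biUnion fun g _ => hsmul_open g _ isOpen_interior
  have hAuniv : A = Set.univ := IsClopen.eq_univ ⟨hAclosed, hAopen⟩ hAne
  have htop : G = ⊤ := by
    rw [eq_top_iff]
    intro h _
    obtain ⟨y, hy⟩ := hint
    have hmemA : h • y ∈ A := hAuniv ▸ Set.mem_univ _
    obtain ⟨g, hg, hmem⟩ := Set.mem_iUnion₂.1 hmemA
    have hkey : g⁻¹ * h ∈ S := key h g ⟨h • y, Set.smul_mem_smul_set hy, hmem⟩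
    have hGmem : g⁻¹ * h ∈ G := Subgroup.subset_closure hkey
    have heq : h = g * (g⁻¹ * h) := by group
    rw [heq]; exact G.mul_mem hg hGmem
  exact ⟨Group.fg_iff.2 ⟨S, htop, hSfin⟩, hSfin, htop⟩
end
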